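/- Let p be a prime and Theta_p in F_p((X^{-1})) with continued fraction expansion [0, X, X^p, X^{p^2}, ...] and convergents p_n/q_n. Then there exist infinitely many rational functions p_n/q_n with |Theta_p - p_n/q_n| <= |q_n|^{-(p+1)}. In particular, for every Phi in F_p((X^{-1})), inf_{q != 0} |q| * ||q Theta_p|| * ||q Phi|| = 0. -/

import Mathlib

open Polynomial Filter

noncomputable section
open scoped Classical

namespace Littlewood

variable (k : Type*) [Field k]

/-- The element `X` of `k((X⁻¹))`: the inverse of the Laurent-series variable `t = X⁻¹`. -/
def XLS : LaurentSeries k := (HahnSeries.single (1 : ℤ) (1 : k))⁻¹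

variable {k}

/-- Embedding of `k[X]` into `k((X⁻¹))`, sending the polynomial variable to `X`. -/
def emb (p : Polynomial k) : LaurentSeries k := Polynomial.aeval (XLS k) p

/-- The degree of a Laurent series in `X⁻¹`: if `F = ∑_{h ≥ -m} f_h X^{-h}` with
`f_{-m} ≠ 0` then `deg F = m`. -/
def deg (F : LaurentSeries k) : ℤ := -F.order

/-- The norm `|F| = 2 ^ deg F`, with `|0| = 0`. -/
def lnorm (F : LaurentSeries k) : ℝ := if F = 0 then 0 else (2 : ℝ) ^ (deg F)

/-- Fractional part: the part of the series comprising only negative powers of `X`. -/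
def frac (F : LaurentSeries k) : LaurentSeries k where
  coeff n := if 1 ≤ n then F.coeff n else 0
  isPWO_support' := F.isPWO_support'.mono (fun n hn => by
    simp only [Function.mem_support] at hn ⊢
    intro h
    exact hn (by simp [h]))

/-- `‖F‖`: the norm of the fractional part of `F`. -/
def fnorm (F : LaurentSeries k) : ℝ := lnorm (frac F)

/-- `F` is a rational function. -/
def IsRat (F : LaurentSeries k) : Prop :=
  ∃ p q : Polynomial k, q ≠ 0 ∧ F * emb q = emb p

/-- The polynomial part of a Laurent series (the part with nonnegative powers of `X`). -/
def polyPart (F : LaurentSeries k) : Polynomial k :=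
  ∑ i ∈ Finset.range ((-F.order).toNat + 1), Polynomial.C (F.coeff (-(i : ℤ))) * Polynomial.X ^ i

/-- The complete quotients of the continued fraction algorithm applied to `F`. -/
def cfRem (F : LaurentSeries k) : ℕ → LaurentSeries k
  | 0 => F
  | n + 1 => (cfRem F n - emb (polyPart (cfRem F n)))⁻¹

/-- The partial quotients of the continued fraction expansion of `F`. -/
def pq (F : LaurentSeries k) (n : ℕ) : Polynomial k := polyPart (cfRem F n)

/-- Denominators `q_n` of the convergents of the continued fraction with
partial quotients `a`. -/
def den (a : ℕ → Polynomial k) : ℕ → Polynomial k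
  | 0 => 1
  | 1 => a 1
  | n + 2 => a (n + 2) * den a (n + 1) + den a n

/-- Numerators `p_n` of the convergents. -/
def num (a : ℕ → Polynomial k) : ℕ → Polynomial k
  | 0 => a 0
  | 1 => a 1 * a 0 + 1
  | n + 2 => a (n + 2) * num a (n + 1) + num a n

/-- The value of a finite continued fraction `[b_0, b_1, …, b_m]` over `k[X]`. -/
def finCF : List (Polynomial k) → LaurentSeries k
  | [] => 0
  | [b] => emb b
  | b :: l => emb b + (finCF l)⁻¹

/-- `F` is badly approximable. -/
def Bad (F : LaurentSeries k) : Prop :=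
  ∃ c : ℝ, 0 < c ∧ ∀ q : Polynomial k, q ≠ 0 → c ≤ lnorm (emb q) * fnorm (emb q * F)

/-! ### Basic lemmas -/

lemma XLS_eq : XLS k = HahnSeries.single (-1 : ℤ) (1 : k) := by
  refine inv_eq_of_mul_eq_one_right ?_
  rw [HahnSeries.single_mul_single]
  norm_num

lemma emb_eq_sum (q : Polynomial k) :
    emb q = ∑ i ∈ q.support, HahnSeries.single (-(i : ℤ)) (q.coeff i) := by
  rw [emb, aeval_def, eval₂_eq_sum, Polynomial.sum]
  refine Finset.sum_congr rfl fun i _ => ?_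
  rw [XLS_eq, HahnSeries.single_pow,
    show (algebraMap k (LaurentSeries k)) (q.coeff i) = HahnSeries.single (0 : ℤ) (q.coeff i) by
      rw [HahnSeries.algebraMap_apply', ← PowerSeries.C_eq_algebraMap,
        HahnSeries.ofPowerSeries_C, HahnSeries.C_apply],
    HahnSeries.single_mul_single]
  simp

lemma emb_coeff (q : Polynomial k) (i : ℕ) : (emb q).coeff (-(i : ℤ)) = q.coeff i := by
  rw [emb_eq_sum]
  rw [show ((∑ j ∈ q.support, HahnSeries.single (-(j : ℤ)) (q.coeff j)).coeff (-(i : ℤ)))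
      = ∑ j ∈ q.support, (HahnSeries.single (-(j : ℤ)) (q.coeff j)).coeff (-(i : ℤ)) from
    map_sum (HahnSeries.coeff.addMonoidHom (-(i : ℤ))) _ _]
  rw [Finset.sum_eq_single i]
  · simp
  · intro j _ hj
    rw [HahnSeries.coeff_single_of_ne]
    intro hc
    exact hj (by exact_mod_cast (neg_injective hc).symm)
  · intro hi
    simp [Polynomial.notMem_support_iff.mp hi]

lemma emb_coeff_pos (q : Polynomial k) {n : ℤ} (hn : 0 < n) : (emb q).coeff n = 0 := by
  rw [emb_eq_sum]
  rw [show ((∑ j ∈ q.support, HahnSeries.single (-(j : ℤ)) (q.coeff j)).coeff n)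
      = ∑ j ∈ q.support, (HahnSeries.single (-(j : ℤ)) (q.coeff j)).coeff n from
    map_sum (HahnSeries.coeff.addMonoidHom n) _ _]
  refine Finset.sum_eq_zero fun j _ => ?_
  rw [HahnSeries.coeff_single_of_ne]
  omega

lemma emb_coeff_nonpos (q : Polynomial k) {n : ℤ} (hn : n ≤ 0) :
    (emb q).coeff n = q.coeff (-n).toNat := by
  have h2 : n = -(((-n).toNat : ℕ) : ℤ) := by omega
  conv_lhs => rw [h2, emb_coeff]

lemma emb_ne_zero {q : Polynomial k} (hq : q ≠ 0) : emb q ≠ 0 := by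
  refine HahnSeries.ne_zero_of_coeff_ne_zero (g := -(q.natDegree : ℤ)) ?_
  rw [emb_coeff, Polynomial.coeff_natDegree]
  exact Polynomial.leadingCoeff_ne_zero.mpr hq

lemma order_eq_of_coeff {x : LaurentSeries k} {d : ℤ} (h1 : x.coeff d ≠ 0)
    (h2 : ∀ n < d, x.coeff n = 0) : x.order = d := by
  have hx : x ≠ 0 := HahnSeries.ne_zero_of_coeff_ne_zero h1
  have hle : x.order ≤ d := HahnSeries.order_le_of_coeff_ne_zero h1
  rcases lt_or_eq_of_le hle with hlt | heq
  · exact absurd (h2 _ hlt) ((mt HahnSeries.coeff_order_eq_zero.mp hx))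
  · exact heq

lemma order_emb {q : Polynomial k} (hq : q ≠ 0) :
    (emb q).order = -(q.natDegree : ℤ) := by
  refine order_eq_of_coeff ?_ ?_
  · rw [emb_coeff, Polynomial.coeff_natDegree]
    exact Polynomial.leadingCoeff_ne_zero.mpr hq
  · intro n hn
    rcases le_or_gt n 0 with h | h
    · rw [emb_coeff_nonpos _ h]
      exact Polynomial.coeff_eq_zero_of_natDegree_lt (by omega)
    · exact emb_coeff_pos _ h

lemma emb_add (a b : Polynomial k) : emb (a + b) = emb a + emb b := by simp [emb]

lemma emb_mul (a b : Polynomial k) : emb (a * b) = emb a * emb b := by simp [emb]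

lemma emb_zero : emb (0 : Polynomial k) = 0 := by simp [emb]

lemma emb_one : emb (1 : Polynomial k) = 1 := by simp [emb]

/-! ### Norm lemmas -/

lemma lnorm_zero : lnorm (0 : LaurentSeries k) = 0 := if_pos rfl

lemma lnorm_of_ne {F : LaurentSeries k} (hF : F ≠ 0) : lnorm F = 2 ^ deg F := if_neg hF

lemma lnorm_nonneg (F : LaurentSeries k) : 0 ≤ lnorm F := by
  rw [lnorm]; split
  · exact le_refl 0
  · positivity

lemma lnorm_pos {F : LaurentSeries k} (hF : F ≠ 0) : 0 < lnorm F := by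
  rw [lnorm_of_ne hF]; positivity

lemma lnorm_one : lnorm (1 : LaurentSeries k) = 1 := by
  rw [lnorm_of_ne one_ne_zero, deg, HahnSeries.order_one]
  norm_num

lemma lnorm_mul (F G : LaurentSeries k) : lnorm (F * G) = lnorm F * lnorm G := by
  by_cases hF : F = 0
  · simp [hF, lnorm_zero]
  by_cases hG : G = 0
  · simp [hG, lnorm_zero]
  rw [lnorm_of_ne hF, lnorm_of_ne hG, lnorm_of_ne (mul_ne_zero hF hG), deg, deg, deg,
    HahnSeries.order_mul hF hG, neg_add, zpow_add₀ (by norm_num : (2:ℝ) ≠ 0)]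

lemma lnorm_inv (F : LaurentSeries k) : lnorm F⁻¹ = (lnorm F)⁻¹ := by
  by_cases hF : F = 0
  · simp [hF, lnorm_zero]
  have h := lnorm_mul F F⁻¹
  rw [mul_inv_cancel₀ hF, lnorm_one] at h
  exact eq_inv_of_mul_eq_one_left (by linarith [h])

lemma lnorm_neg (F : LaurentSeries k) : lnorm (-F) = lnorm F := by
  by_cases hF : F = 0
  · simp [hF]
  have h1 : -F = (-1 : LaurentSeries k) * F := by ring
  rw [h1, lnorm_mul]
  have h2 : lnorm (-1 : LaurentSeries k) = 1 := by
    have h := lnorm_mul (-1 : LaurentSeries k) (-1)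
    rw [show ((-1 : LaurentSeries k) * -1) = 1 by ring, lnorm_one] at h
    nlinarith [lnorm_nonneg (-1 : LaurentSeries k)]
  rw [h2, one_mul]

/-! ### frac and polyPart -/

lemma frac_coeff (F : LaurentSeries k) (n : ℤ) :
    (frac F).coeff n = if 1 ≤ n then F.coeff n else 0 := rfl

lemma polyPart_coeff (F : LaurentSeries k) (j : ℕ) :
    (polyPart F).coeff j = if j ≤ (-F.order).toNat then F.coeff (-(j : ℤ)) else 0 := by
  rw [polyPart, Polynomial.finset_sum_coeff]
  have : ∀ i ∈ Finset.range ((-F.order).toNat + 1),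
      (Polynomial.C (F.coeff (-(i : ℤ))) * Polynomial.X ^ i).coeff j
        = if j = i then F.coeff (-(i : ℤ)) else 0 := by
    intro i _
    rw [Polynomial.coeff_C_mul, Polynomial.coeff_X_pow]
    split <;> simp_all
  rw [Finset.sum_congr rfl this, Finset.sum_ite_eq (Finset.range ((-F.order).toNat + 1)) j
    (fun i => F.coeff (-(i : ℤ)))]
  simp only [Finset.mem_range]
  split <;> split <;> first | rfl | omega

lemma emb_polyPart_coeff (F : LaurentSeries k) (n : ℤ) :
    (emb (polyPart F)).coeff n = if n ≤ 0 then F.coeff n else 0 := by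
  rcases le_or_gt n 0 with h | h
  · rw [if_pos h, emb_coeff_nonpos _ h, polyPart_coeff]
    split
    · congr 1; omega
    · rename_i hgt
      refine (HahnSeries.coeff_eq_zero_of_lt_order ?_).symm
      omega
  · rw [if_neg (not_le.mpr h)]
    exact emb_coeff_pos _ h

lemma emb_polyPart_add_frac (F : LaurentSeries k) : emb (polyPart F) + frac F = F := by
  ext n
  rw [HahnSeries.coeff_add, emb_polyPart_coeff, frac_coeff]
  split <;> split <;> first | (simp; done) | omega

lemma frac_eq_sub (F : LaurentSeries k) : frac F = F - emb (polyPart F) := by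
  rw [eq_sub_iff_add_eq, add_comm]; exact emb_polyPart_add_frac F

lemma frac_add_emb (F : LaurentSeries k) (q : Polynomial k) : frac (F + emb q) = frac F := by
  ext n
  rw [frac_coeff, frac_coeff]
  split
  · rw [HahnSeries.coeff_add, emb_coeff_pos q (by omega), add_zero]
  · rfl

lemma order_frac {F : LaurentSeries k} (h : frac F ≠ 0) : 1 ≤ (frac F).order := by
  by_contra hc
  exact mt HahnSeries.coeff_order_eq_zero.mp h (by rw [frac_coeff, if_neg hc])

lemma frac_eq_self {F : LaurentSeries k} (hF : F ≠ 0) (h : 1 ≤ F.order) : frac F = F := by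
  ext n
  rw [frac_coeff]
  split
  · rfl
  · exact (HahnSeries.coeff_eq_zero_of_lt_order (by omega)).symm

lemma fnorm_nonneg (F : LaurentSeries k) : 0 ≤ fnorm F := lnorm_nonneg _

lemma fnorm_le_half (F : LaurentSeries k) : fnorm F ≤ 1 / 2 := by
  rw [fnorm]
  by_cases h : frac F = 0
  · rw [h, lnorm_zero]; norm_num
  · rw [lnorm_of_ne h]
    have h1 := order_frac h
    have : deg (frac F) ≤ -1 := by rw [deg]; omega
    calc (2:ℝ) ^ deg (frac F) ≤ 2 ^ (-1 : ℤ) := by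
          apply zpow_le_zpow_right₀ (by norm_num) this
      _ = 1/2 := by norm_num

/-! ### Rationality and cfRem -/

lemma isRat_emb (q : Polynomial k) : IsRat (emb q) := ⟨q, 1, one_ne_zero, by rw [emb_one, mul_one]⟩

lemma IsRat.add_emb {F : LaurentSeries k} (hF : IsRat F) (r : Polynomial k) :
    IsRat (F + emb r) := by
  obtain ⟨a, b, hb, hab⟩ := hF
  exact ⟨a + r * b, b, hb, by rw [emb_add, emb_mul, add_mul, hab]⟩

lemma IsRat.inv {F : LaurentSeries k} (hF : IsRat F) : IsRat F⁻¹ := by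
  by_cases h0 : F = 0
  · exact ⟨0, 1, one_ne_zero, by simp [h0, emb_zero, emb_one]⟩
  obtain ⟨a, b, hb, hab⟩ := hF
  have ha : a ≠ 0 := by
    rintro rfl
    rw [emb_zero] at hab
    exact (mul_ne_zero h0 (emb_ne_zero hb)) hab
  refine ⟨b, a, ha, ?_⟩
  have : F * (F⁻¹ * emb a) = F * emb b := by
    rw [← mul_assoc, mul_inv_cancel₀ h0, one_mul, hab]
  exact mul_left_cancel₀ h0 this

lemma not_isRat_ne_zero {F : LaurentSeries k} (hF : ¬IsRat F) : F ≠ 0 := by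
  rintro rfl
  exact hF ⟨0, 1, one_ne_zero, by simp [emb_zero, emb_one]⟩

lemma cfRem_not_isRat {Θ : LaurentSeries k} (hΘ : ¬IsRat Θ) (n : ℕ) :
    ¬IsRat (cfRem Θ n) := by
  induction n with
  | zero => exact hΘ
  | succ n ih =>
    intro hr
    apply ih
    rw [cfRem] at hr
    set G := cfRem Θ n - emb (polyPart (cfRem Θ n)) with hG
    by_cases hG0 : G = 0
    · have : cfRem Θ n = emb (polyPart (cfRem Θ n)) := by
        have := sub_eq_zero.mp hG0; exact this
      rw [this]; exact isRat_emb _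
    · have h1 : IsRat G := by
        have := hr.inv
        rwa [inv_inv] at this
      have h2 := h1.add_emb (polyPart (cfRem Θ n))
      rwa [hG, sub_add_cancel] at h2

lemma cfRem_ne_zero {Θ : LaurentSeries k} (hΘ : ¬IsRat Θ) (n : ℕ) : cfRem Θ n ≠ 0 :=
  not_isRat_ne_zero (cfRem_not_isRat hΘ n)

lemma frac_cfRem_ne_zero {Θ : LaurentSeries k} (hΘ : ¬IsRat Θ) (n : ℕ) :
    frac (cfRem Θ n) ≠ 0 := by
  intro h0
  rw [frac_eq_sub, sub_eq_zero] at h0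
  exact cfRem_not_isRat hΘ n (h0 ▸ isRat_emb _)

lemma cfRem_succ (Θ : LaurentSeries k) (n : ℕ) :
    cfRem Θ (n + 1) = (frac (cfRem Θ n))⁻¹ := by
  rw [cfRem, ← frac_eq_sub]

lemma cfRem_eq (Θ : LaurentSeries k) (n : ℕ) :
    cfRem Θ n = emb (pq Θ n) + (cfRem Θ (n + 1))⁻¹ := by
  rw [cfRem_succ, inv_inv, pq]
  exact (emb_polyPart_add_frac _).symm

lemma cfRem_one {Θ : LaurentSeries k} (h0 : pq Θ 0 = 0) : cfRem Θ 1 = Θ⁻¹ := by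
  rw [cfRem_succ, frac_eq_sub]
  have h1 : polyPart Θ = 0 := h0
  rw [show cfRem Θ 0 = Θ from rfl, h1, emb_zero, sub_zero]

lemma order_cfRem_succ {Θ : LaurentSeries k} (n : ℕ)
    (hd : 1 ≤ (pq Θ (n + 1)).natDegree) :
    (cfRem Θ (n + 1)).order = -((pq Θ (n + 1)).natDegree : ℤ) := by
  set q := pq Θ (n + 1) with hq
  have hq0 : q ≠ 0 := by
    intro h; rw [h] at hd; simp at hd
  have hF : emb q + frac (cfRem Θ (n + 1)) = cfRem Θ (n + 1) := emb_polyPart_add_frac _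
  refine order_eq_of_coeff ?_ ?_
  · rw [← hF, HahnSeries.coeff_add, frac_coeff, if_neg (by omega), add_zero, emb_coeff,
      Polynomial.coeff_natDegree]
    exact Polynomial.leadingCoeff_ne_zero.mpr hq0
  · intro m hm
    have hm0 : m ≤ 0 := by omega
    rw [← hF, HahnSeries.coeff_add, frac_coeff, if_neg (by omega), add_zero,
      emb_coeff_nonpos _ hm0]
    exact Polynomial.coeff_eq_zero_of_natDegree_lt (by omega)

/-! ### order of inverses; denominators -/

lemma order_inv {F : LaurentSeries k} (hF : F ≠ 0) : F⁻¹.order = -F.order := by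
  have h := HahnSeries.order_mul (inv_ne_zero hF) hF
  rw [inv_mul_cancel₀ hF, HahnSeries.order_one] at h
  omega

lemma lnorm_emb {q : Polynomial k} (hq : q ≠ 0) :
    lnorm (emb q) = 2 ^ (q.natDegree : ℤ) := by
  rw [lnorm_of_ne (emb_ne_zero hq), deg, order_emb hq, neg_neg]

lemma den_monic_deg {a : ℕ → Polynomial k} {d : ℕ → ℕ}
    (hX : ∀ n, a (n + 1) = Polynomial.X ^ d n) (hd : ∀ n, 1 ≤ d n) (n : ℕ) :
    (den a n).Monic ∧ (den a n).natDegree = ∑ j ∈ Finset.range n, d j := by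
  have key : ∀ n : ℕ, ((den a n).Monic ∧ (den a n).natDegree = ∑ j ∈ Finset.range n, d j)
      ∧ ((den a (n + 1)).Monic ∧ (den a (n + 1)).natDegree = ∑ j ∈ Finset.range (n + 1), d j) := by
    intro n
    induction n with
    | zero =>
      refine ⟨⟨monic_one, by simp [den]⟩, ?_, ?_⟩
      · show (den a 1).Monic
        rw [show den a 1 = a 1 from rfl, hX 0]
        exact monic_X_pow _
      · rw [show den a 1 = a 1 from rfl, hX 0]
        simp [natDegree_pow]
    | succ n ih =>
      refine ⟨ih.2, ?_⟩
      have hm2 : (a (n + 2)).Monic := by rw [hX (n + 1)]; exact monic_X_pow _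
      have hmul : (a (n + 2) * den a (n + 1)).Monic := hm2.mul ih.2.1
      have hndmul : (a (n + 2) * den a (n + 1)).natDegree
          = d (n + 1) + ∑ j ∈ Finset.range (n + 1), d j := by
        rw [hm2.natDegree_mul ih.2.1, ih.2.2, hX (n + 1), natDegree_pow, natDegree_X, mul_one]
      have hlt : (den a n).degree < (a (n + 2) * den a (n + 1)).degree := by
        apply degree_lt_degree
        rw [hndmul, ih.1.2]
        have : ∑ j ∈ Finset.range n, d j ≤ ∑ j ∈ Finset.range (n + 1), d j :=
          Finset.sum_le_sum_of_subset (Finset.range_subset_range.mpr (by omega))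
        have := hd (n + 1)
        omega
      constructor
      · rw [show den a (n + 2) = a (n + 2) * den a (n + 1) + den a n from rfl]
        exact hmul.add_of_left hlt
      · rw [show den a (n + 2) = a (n + 2) * den a (n + 1) + den a n from rfl,
          natDegree_eq_of_degree_eq (degree_add_eq_left_of_degree_lt hlt), hndmul,
          Finset.sum_range_succ (n := n + 1)]
        omega
  exact (key n).1

/-! ### The key identity -/

lemma D_zero {Θ : LaurentSeries k} (h0 : pq Θ 0 = 0) :
    Θ * emb (den (pq Θ) 0) - emb (num (pq Θ) 0) = Θ := by
  rw [show den (pq Θ) 0 = 1 from rfl, show num (pq Θ) 0 = pq Θ 0 from rfl, h0, emb_one,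
    emb_zero, mul_one, sub_zero]

lemma key_succ {Θ : LaurentSeries k} (hΘ : ¬IsRat Θ) (h0 : pq Θ 0 = 0) (n : ℕ) :
    (Θ * emb (den (pq Θ) (n + 1)) - emb (num (pq Θ) (n + 1))) * cfRem Θ (n + 2)
      = -(Θ * emb (den (pq Θ) n) - emb (num (pq Θ) n)) := by
  set a := pq Θ with ha
  induction n with
  | zero =>
    have hΘ0 : Θ ≠ 0 := not_isRat_ne_zero hΘ
    have hx2 : cfRem Θ 2 ≠ 0 := cfRem_ne_zero hΘ 2
    have e1 : cfRem Θ 1 = emb (a 1) + (cfRem Θ 2)⁻¹ := cfRem_eq Θ 1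
    rw [cfRem_one h0] at e1
    have ha0 : a 0 = 0 := h0
    rw [show den a 1 = a 1 from rfl, show num a 1 = a 1 * a 0 + 1 from rfl,
      show den a 0 = 1 from rfl, show num a 0 = a 0 from rfl, ha0, mul_zero, zero_add,
      emb_one, emb_zero, mul_one, sub_zero]
    have hA : emb (a 1) = Θ⁻¹ - (cfRem Θ 2)⁻¹ := by
      rw [e1]; ring
    rw [hA]
    field_simp
    ring
  | succ n ih =>
    have hx : cfRem Θ (n + 3) ≠ 0 := cfRem_ne_zero hΘ _
    have e2 : cfRem Θ (n + 2) = emb (a (n + 2)) + (cfRem Θ (n + 3))⁻¹ := cfRem_eq Θ (n + 2)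
    have hDn : Θ * emb (den a n) - emb (num a n)
        = -((Θ * emb (den a (n + 1)) - emb (num a (n + 1))) * cfRem Θ (n + 2)) := by
      rw [ih]; ring
    have hkey : emb (a (n + 2)) * (Θ * emb (den a (n + 1)) - emb (num a (n + 1)))
          + (Θ * emb (den a n) - emb (num a n))
        = -(Θ * emb (den a (n + 1)) - emb (num a (n + 1))) * (cfRem Θ (n + 3))⁻¹ := by
      rw [hDn, e2]; ring
    calc (Θ * emb (den a (n + 2)) - emb (num a (n + 2))) * cfRem Θ (n + 3)
        = (emb (a (n + 2)) * (Θ * emb (den a (n + 1)) - emb (num a (n + 1)))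
            + (Θ * emb (den a n) - emb (num a n))) * cfRem Θ (n + 3) := by
          rw [show den a (n + 2) = a (n + 2) * den a (n + 1) + den a n from rfl,
            show num a (n + 2) = a (n + 2) * num a (n + 1) + num a n from rfl,
            emb_add, emb_mul, emb_add, emb_mul]
          ring
      _ = -(Θ * emb (den a (n + 1)) - emb (num a (n + 1)))
            * ((cfRem Θ (n + 3))⁻¹ * cfRem Θ (n + 3)) := by rw [hkey]; ring
      _ = -(Θ * emb (den a (n + 1)) - emb (num a (n + 1))) := by
            rw [inv_mul_cancel₀ hx, mul_one]

lemma D_spec {Θ : LaurentSeries k} {d : ℕ → ℕ} (hΘ : ¬IsRat Θ) (h0 : pq Θ 0 = 0)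
    (hX : ∀ n, pq Θ (n + 1) = Polynomial.X ^ d n) (hd : ∀ n, 1 ≤ d n) (n : ℕ) :
    (Θ * emb (den (pq Θ) n) - emb (num (pq Θ) n)) ≠ 0 ∧
      (Θ * emb (den (pq Θ) n) - emb (num (pq Θ) n)).order
        = (∑ j ∈ Finset.range (n + 1), d j : ℤ) := by
  have hnd : ∀ m : ℕ, (pq Θ (m + 1)).natDegree = d m := fun m => by
    rw [hX m, natDegree_pow, natDegree_X, mul_one]
  have horder : ∀ m : ℕ, (cfRem Θ (m + 1)).order = -(d m : ℤ) := fun m => by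
    rw [order_cfRem_succ m (by rw [hnd m]; exact hd m), hnd m]
  induction n with
  | zero =>
    rw [D_zero h0]
    refine ⟨not_isRat_ne_zero hΘ, ?_⟩
    have hΘeq : Θ = (cfRem Θ 1)⁻¹ := by rw [cfRem_one h0, inv_inv]
    rw [hΘeq, order_inv (cfRem_ne_zero hΘ 1), horder 0]
    simp
  | succ n ih =>
    have hkey := key_succ hΘ h0 n
    have hne : (Θ * emb (den (pq Θ) (n + 1)) - emb (num (pq Θ) (n + 1))) ≠ 0 := by
      intro hc
      rw [hc, zero_mul] at hkey
      exact ih.1 (by rw [← neg_neg (Θ * emb (den (pq Θ) n) - emb (num (pq Θ) n)), ← hkey,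
        neg_zero])
    refine ⟨hne, ?_⟩
    have h2 := HahnSeries.order_mul hne (cfRem_ne_zero hΘ (n + 2))
    rw [hkey, HahnSeries.order_neg, ih.2, horder (n + 1)] at h2
    rw [Finset.sum_range_succ]
    push_cast at h2 ⊢
    omega

theorem mahler_example_well_approximable (p : ℕ) [Fact p.Prime] (Θ : LaurentSeries (ZMod p))
    (hΘ : ¬ IsRat Θ) (h0 : pq Θ 0 = 0)
    (h : ∀ n : ℕ, pq Θ (n + 1) = Polynomial.X ^ p ^ n) :
    (∀ N : ℕ, ∃ n : ℕ, N ≤ n ∧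
        lnorm (Θ - emb (num (pq Θ) n) / emb (den (pq Θ) n)) ≤
          (lnorm (emb (den (pq Θ) n)) ^ (p + 1))⁻¹) ∧
      ∀ Φ : LaurentSeries (ZMod p), ∀ ε : ℝ, 0 < ε → ∃ q : Polynomial (ZMod p), q ≠ 0 ∧
        lnorm (emb q) * fnorm (emb q * Θ) * fnorm (emb q * Φ) < ε := by
  have hp : p.Prime := Fact.out
  set a := pq Θ with ha
  set d : ℕ → ℕ := fun n => p ^ n with hdd
  set e : ℕ → ℕ := fun n => ∑ j ∈ Finset.range n, d j with hee
  have hd : ∀ n, 1 ≤ d n := fun n => Nat.one_le_pow _ _ hp.pos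
  have hden : ∀ n, (den a n).Monic ∧ (den a n).natDegree = e n := den_monic_deg h hd
  have hdenne : ∀ n, den a n ≠ 0 := fun n => (hden n).1.ne_zero
  have hD := D_spec hΘ h0 h hd
  have he : ∀ n, e (n + 1) = e n + p ^ n := fun n => Finset.sum_range_succ d n
  have he' : ∀ n, e (n + 1) = p * e n + 1 := by
    intro n
    induction n with
    | zero => simp [hee, hdd]
    | succ n ih =>
      calc e (n + 1 + 1) = e (n + 1) + p ^ (n + 1) := he (n + 1)
        _ = (p * e n + 1) + p * p ^ n := by rw [ih]; ring
        _ = p * (e n + p ^ n) + 1 := by ring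
        _ = p * e (n + 1) + 1 := by rw [he n]
  have hlnormden : ∀ n, lnorm (emb (den a n)) = 2 ^ (e n : ℤ) := fun n => by
    rw [lnorm_emb (hdenne n), (hden n).2]
  have hcast : ∀ m : ℕ, (∑ j ∈ Finset.range m, ((p ^ j : ℕ) : ℤ)) = ((e m : ℕ) : ℤ) := by
    intro m
    rw [hee]
    push_cast [hdd]
    rfl
  have hlnormD : ∀ n, lnorm (Θ * emb (den a n) - emb (num a n)) = 2 ^ (-(e (n + 1) : ℤ)) :=
    fun n => by rw [lnorm_of_ne (hD n).1, deg, (hD n).2, hcast]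
  constructor
  · -- part 1
    intro N
    refine ⟨N, le_refl N, ?_⟩
    have hQ : emb (den a N) ≠ 0 := emb_ne_zero (hdenne N)
    have hsplit : Θ - emb (num a N) / emb (den a N)
        = (Θ * emb (den a N) - emb (num a N)) * (emb (den a N))⁻¹ := by
      field_simp
    rw [hsplit, lnorm_mul, lnorm_inv, hlnormD N, hlnormden N, ← zpow_neg,
      ← zpow_add₀ (by norm_num : (2:ℝ) ≠ 0),
      ← zpow_natCast ((2:ℝ) ^ ((e N : ℕ) : ℤ)) (p + 1), ← zpow_mul, ← zpow_neg]
    apply zpow_le_zpow_right₀ (by norm_num : (1:ℝ) ≤ 2)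
    have h2 := he' N
    have h3 : (e (N + 1) : ℤ) = p * e N + 1 := by exact_mod_cast h2
    push_cast
    nlinarith [h3]
  · -- part 2
    intro Φ ε hε
    obtain ⟨n, hn⟩ := exists_pow_lt_of_lt_one hε (by norm_num : (1:ℝ)/2 < 1)
    refine ⟨den a n, hdenne n, ?_⟩
    have hfrac : frac (emb (den a n) * Θ) = Θ * emb (den a n) - emb (num a n) := by
      have h1 : emb (den a n) * Θ = (Θ * emb (den a n) - emb (num a n)) + emb (num a n) := by
        ring
      rw [h1, frac_add_emb]
      refine frac_eq_self (hD n).1 ?_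
      rw [(hD n).2]
      have := he' n
      have h2 : 1 ≤ e (n + 1) := by omega
      exact_mod_cast h2
    have hfn : fnorm (emb (den a n) * Θ) = 2 ^ (-(e (n + 1) : ℤ)) := by
      rw [fnorm, hfrac, hlnormD n]
    have hC0 : 0 ≤ fnorm (emb (den a n) * Φ) := fnorm_nonneg _
    have hC : fnorm (emb (den a n) * Φ) ≤ 1 / 2 := fnorm_le_half _
    have hpow : (2:ℝ) ^ ((e n : ℤ) + -(e (n + 1) : ℤ)) ≤ 2 ^ (-(n:ℤ)) := by
      apply zpow_le_zpow_right₀ (by norm_num : (1:ℝ) ≤ 2)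
      have h1 : e (n + 1) = e n + p ^ n := he n
      have h2 : n < p ^ n := lt_of_lt_of_le Nat.lt_two_pow_self
        (Nat.pow_le_pow_left hp.two_le n)
      omega
    calc lnorm (emb (den a n)) * fnorm (emb (den a n) * Θ) * fnorm (emb (den a n) * Φ)
        = 2 ^ ((e n : ℤ) + -(e (n + 1) : ℤ)) * fnorm (emb (den a n) * Φ) := by
          rw [hlnormden n, hfn, ← zpow_add₀ (by norm_num : (2:ℝ) ≠ 0)]
      _ ≤ 2 ^ (-(n:ℤ)) * (1 / 2) := by
          apply mul_le_mul hpow hC hC0 (by positivity)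
      _ < 2 ^ (-(n:ℤ)) * 1 := by
          apply mul_lt_mul_of_pos_left (by norm_num) (by positivity)
      _ = (1 / 2 : ℝ) ^ n := by
          rw [mul_one, zpow_neg, zpow_natCast, div_pow, one_pow, one_div]
      _ < ε := hn
end Littlewood
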